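/- Fix p, q > 1 and x ∈ (0,1). The function k ↦ (arcsin_{p,q}(x^k))^{1/k} is decreasing on (0,∞). -/

import Mathlib

open Real Set MeasureTheory

noncomputable def fpq (p q t : ℝ) : ℝ := (1 - t ^ q) ^ (-1/p)

lemma pos_base {q : ℝ} (hq : 1 < q) {t : ℝ} (ht : |t| < 1) : 0 < 1 - t ^ q := by
  have h1 : t ^ q ≤ |t ^ q| := le_abs_self _
  have h2 : |t ^ q| ≤ |t| ^ q := Real.abs_rpow_le_abs_rpow t q
  have h3 : |t| ^ q < 1 := Real.rpow_lt_one (abs_nonneg t) ht (by linarith)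
  linarith

lemma fpq_cont {p q : ℝ} (hp : 1 < p) (hq : 1 < q) :
    ContinuousOn (fpq p q) (Ioo (-1:ℝ) 1) := by
  intro t ht
  have ht' : |t| < 1 := abs_lt.2 ⟨ht.1, ht.2⟩
  have h1 : ContinuousAt (fun t : ℝ => t ^ q) t :=
    Real.continuousAt_rpow_const t q (Or.inr (by linarith))
  have h2 : (1 - t ^ q) ≠ 0 := (pos_base hq ht').ne'
  have h3 : ContinuousAt (fun t : ℝ => 1 - t ^ q) t := continuousAt_const.sub h1
  exact (h3.rpow_const (Or.inl h2)).continuousWithinAt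

noncomputable def arcsinpq (p q x : ℝ) : ℝ :=
  ∫ t in (0:ℝ)..x, (1 - t ^ q) ^ (-1/p)

lemma fpq_one_le {p q : ℝ} (hp : 1 < p) (hq : 1 < q) {t : ℝ} (h0 : 0 ≤ t) (h1 : t < 1) :
    1 ≤ fpq p q t := by
  have hb : 0 < 1 - t ^ q := pos_base hq (by rwa [abs_of_nonneg h0])
  have hb1 : 1 - t ^ q ≤ 1 := by
    have : 0 ≤ t ^ q := Real.rpow_nonneg h0 q
    linarith
  exact Real.one_le_rpow_of_pos_of_le_one_of_nonpos hb hb1 (div_nonpos_of_nonpos_of_nonneg (by norm_num) (by linarith))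

lemma fpq_nonneg {p q : ℝ} (hq : 1 < q) {t : ℝ} (h0 : 0 ≤ t) (h1 : t < 1) :
    0 ≤ fpq p q t :=
  Real.rpow_nonneg (pos_base hq (by rwa [abs_of_nonneg h0])).le _

lemma fpq_mono {p q : ℝ} (hp : 1 < p) (hq : 1 < q) {a b : ℝ} (ha : 0 ≤ a) (hab : a ≤ b)
    (hb : b < 1) : fpq p q a ≤ fpq p q b := by
  have hbp : 0 < 1 - b ^ q := pos_base hq (by rw [abs_of_nonneg (ha.trans hab)]; exact hb)
  have h2 : 1 - b ^ q ≤ 1 - a ^ q := by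
    have := Real.rpow_le_rpow ha hab (by linarith : (0:ℝ) ≤ q)
    linarith
  exact Real.rpow_le_rpow_of_nonpos hbp h2 (div_nonpos_of_nonpos_of_nonneg (by norm_num) (by linarith))

lemma fpq_int {p q : ℝ} (hp : 1 < p) (hq : 1 < q) {z : ℝ} (hz0 : 0 ≤ z) (hz1 : z < 1) :
    IntervalIntegrable (fpq p q) volume 0 z := by
  apply ContinuousOn.intervalIntegrable
  apply (fpq_cont hp hq).mono
  rw [uIcc_of_le hz0]
  exact fun t ht => ⟨by linarith [ht.1], lt_of_le_of_lt ht.2 hz1⟩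

lemma arcsinpq_hasDerivAt {p q : ℝ} (hp : 1 < p) (hq : 1 < q) {z : ℝ} (hz0 : 0 ≤ z)
    (hz1 : z < 1) : HasDerivAt (arcsinpq p q) (fpq p q z) z := by
  have hmem : z ∈ Ioo (-1:ℝ) 1 := ⟨by linarith, hz1⟩
  exact intervalIntegral.integral_hasDerivAt_right (fpq_int hp hq hz0 hz1)
    ((fpq_cont hp hq).stronglyMeasurableAtFilter isOpen_Ioo _ hmem)
    ((fpq_cont hp hq).continuousAt (isOpen_Ioo.mem_nhds hmem))

lemma arcsinpq_lower {p q : ℝ} (hp : 1 < p) (hq : 1 < q) {z : ℝ} (hz0 : 0 ≤ z) (hz1 : z < 1) :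
    z ≤ arcsinpq p q z := by
  calc z = ∫ t in (0:ℝ)..z, (1:ℝ) := by simp
    _ ≤ ∫ t in (0:ℝ)..z, fpq p q t :=
      intervalIntegral.integral_mono_on hz0 intervalIntegrable_const (fpq_int hp hq hz0 hz1)
        (fun t ht => fpq_one_le hp hq ht.1 (lt_of_le_of_lt ht.2 hz1))
    _ = arcsinpq p q z := rfl

lemma arcsinpq_key {p q : ℝ} (hp : 1 < p) (hq : 1 < q) {y c : ℝ} (hy : y ∈ Ioo (0:ℝ) 1)
    (hc : 1 ≤ c) : arcsinpq p q (y ^ c) ≤ arcsinpq p q y ^ c := by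
  have hc0 : (0:ℝ) < c := by linarith
  have hsc_le : ∀ s ∈ Icc (0:ℝ) y, s ^ c ≤ s := by
    intro s hs
    rcases eq_or_lt_of_le hs.1 with h | h
    · rw [← h, Real.zero_rpow hc0.ne']
    · calc s ^ c ≤ s ^ (1:ℝ) :=
        Real.rpow_le_rpow_of_exponent_ge h (by linarith [hs.2, hy.2]) hc
      _ = s := Real.rpow_one s
  have hderiv : ∀ s ∈ Icc (0:ℝ) y,
      HasDerivAt (fun s => arcsinpq p q s ^ c - arcsinpq p q (s ^ c))
        (fpq p q s * c * arcsinpq p q s ^ (c - 1) - fpq p q (s ^ c) * (c * s ^ (c - 1))) s := by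
    intro s hs
    have hs1 : s < 1 := lt_of_le_of_lt hs.2 hy.2
    have hF := arcsinpq_hasDerivAt hp hq hs.1 hs1
    have h1 : HasDerivAt (fun s => arcsinpq p q s ^ c)
        (fpq p q s * c * arcsinpq p q s ^ (c - 1)) s := hF.rpow_const (Or.inr hc)
    have hsc0 : 0 ≤ s ^ c := Real.rpow_nonneg hs.1 c
    have hsc1 : s ^ c < 1 := lt_of_le_of_lt (hsc_le s hs) hs1
    have hpow : HasDerivAt (fun s : ℝ => s ^ c) (c * s ^ (c - 1)) s :=
      Real.hasDerivAt_rpow_const (Or.inr hc)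
    have h2 : HasDerivAt (fun s => arcsinpq p q (s ^ c)) (fpq p q (s ^ c) * (c * s ^ (c - 1))) s :=
      HasDerivAt.comp (h₂ := fun t => arcsinpq p q t) s (arcsinpq_hasDerivAt hp hq hsc0 hsc1) hpow
    exact h1.sub h2
  have hmono : MonotoneOn (fun s => arcsinpq p q s ^ c - arcsinpq p q (s ^ c)) (Icc 0 y) := by
    apply monotoneOn_of_deriv_nonneg (convex_Icc _ _)
    · exact fun s hs => (hderiv s hs).continuousAt.continuousWithinAt
    · exact fun s hs => ((hderiv s (interior_subset hs)).differentiableAt).differentiableWithinAt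
    · intro s hs
      rw [interior_Icc] at hs
      rw [(hderiv s ⟨hs.1.le, hs.2.le⟩).deriv]
      have hs1 : s < 1 := lt_trans hs.2 hy.2
      have hsmem : s ∈ Icc (0:ℝ) y := ⟨hs.1.le, hs.2.le⟩
      have hfs0 : 0 ≤ fpq p q s := fpq_nonneg hq hs.1.le hs1
      have hsc1 : s ^ c < 1 := lt_of_le_of_lt (hsc_le s hsmem) hs1
      have h1 : fpq p q (s ^ c) ≤ fpq p q s :=
        fpq_mono hp hq (Real.rpow_nonneg hs.1.le c) (hsc_le s hsmem) hs1
      have h2 : s ^ (c - 1) ≤ arcsinpq p q s ^ (c - 1) :=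
        Real.rpow_le_rpow hs.1.le (arcsinpq_lower hp hq hs.1.le hs1) (by linarith)
      have hsc10 : (0:ℝ) ≤ s ^ (c - 1) := Real.rpow_nonneg hs.1.le _
      have hcalc : fpq p q (s ^ c) * (c * s ^ (c - 1)) ≤ fpq p q s * c * arcsinpq p q s ^ (c - 1) := by
        calc fpq p q (s ^ c) * (c * s ^ (c - 1)) ≤ fpq p q s * (c * s ^ (c - 1)) :=
              mul_le_mul_of_nonneg_right h1 (by positivity)
          _ = fpq p q s * c * s ^ (c - 1) := by ring
          _ ≤ fpq p q s * c * arcsinpq p q s ^ (c - 1) :=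
              mul_le_mul_of_nonneg_left h2 (by positivity)
      linarith
  have h0mem : (0:ℝ) ∈ Icc (0:ℝ) y := ⟨le_refl _, hy.1.le⟩
  have hymem : y ∈ Icc (0:ℝ) y := ⟨hy.1.le, le_refl _⟩
  have := hmono h0mem hymem hy.1.le
  have hF0 : arcsinpq p q 0 = 0 := intervalIntegral.integral_same
  simp only [hF0, Real.zero_rpow hc0.ne'] at this
  linarith [this]

theorem stmt6 (p q x : ℝ) (hp : 1 < p) (hq : 1 < q) (hx : x ∈ Ioo (0:ℝ) 1) :
    AntitoneOn (fun k : ℝ => (arcsinpq p q (x ^ k)) ^ (1/k)) (Ioi 0) := by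
  intro a ha b hb hab
  simp only [mem_Ioi] at ha hb
  have hy : x ^ a ∈ Ioo (0:ℝ) 1 :=
    ⟨Real.rpow_pos_of_pos hx.1 a, Real.rpow_lt_one hx.1.le hx.2 ha⟩
  have hc : 1 ≤ b / a := (one_le_div ha).2 hab
  have hxb : x ^ b = (x ^ a) ^ (b / a) := by
    rw [← Real.rpow_mul hx.1.le]
    congr 1
    field_simp
  have hyb : x ^ b ∈ Ioo (0:ℝ) 1 :=
    ⟨Real.rpow_pos_of_pos hx.1 b, Real.rpow_lt_one hx.1.le hx.2 hb⟩
  have h0b : 0 ≤ arcsinpq p q (x ^ b) :=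
    le_trans hyb.1.le (arcsinpq_lower hp hq hyb.1.le hyb.2)
  have h0a : 0 ≤ arcsinpq p q (x ^ a) :=
    le_trans hy.1.le (arcsinpq_lower hp hq hy.1.le hy.2)
  have key : arcsinpq p q (x ^ b) ≤ arcsinpq p q (x ^ a) ^ (b / a) := by
    rw [hxb]; exact arcsinpq_key hp hq hy hc
  calc arcsinpq p q (x ^ b) ^ (1/b)
      ≤ (arcsinpq p q (x ^ a) ^ (b / a)) ^ (1/b) :=
        Real.rpow_le_rpow h0b key (by positivity)
    _ = arcsinpq p q (x ^ a) ^ (b / a * (1/b)) := by rw [← Real.rpow_mul h0a]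
    _ = arcsinpq p q (x ^ a) ^ (1/a) := by
        congr 1
        field_simp
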